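/- Let f : ℝⁿ → ℝ be convex and twice differentiable with ∇²f(x) ⪯ β·I for all x ∈ ℝⁿ, where β > 0, let x* be a minimizer of f, and let r ≥ 0 be such that ‖x − x*‖ ≤ r for every x with f(x) ≤ f(y₀). Let (y_k)_{k≥0} be any sequence in ℝⁿ satisfying the decrease guarantee f(y_{k+1}) ≤ f(y_k) − ‖∇f(y_k)‖²/(2β) for all k ≥ 0. Then for all k ≥ 0, f(y_k) − f(x*) ≤ 2βr²/(k+4). -/

import Mathlib

open InnerProductSpace Set

variable {E : Type*} [NormedAddCommGroup E] [InnerProductSpace ℝ E] [CompleteSpace E]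

lemma inner_gradient_eq (f : E → ℝ) (x v : E) :
    (inner ℝ (gradient f x) v : ℝ) = fderiv ℝ f x v := by
  simp [gradient, toDual_symm_apply]

lemma line_hasDerivAt (a v : E) (t : ℝ) :
    HasDerivAt (fun s : ℝ => a + s • v) v t := by
  simpa using ((hasDerivAt_id t).smul_const v).const_add a

lemma conv_grad (f : E → ℝ) (hconv : ConvexOn ℝ Set.univ f)
    (hdiff : Differentiable ℝ f) (a b : E) :
    f a + (inner ℝ (gradient f a) (b - a) : ℝ) ≤ f b := by
  set g : ℝ → ℝ := fun t => f (a + t • (b - a)) with hg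
  have hgconv : ConvexOn ℝ Set.univ g := by
    have h := hconv.comp_affineMap (AffineMap.lineMap a b)
    have he : g = f ∘ (AffineMap.lineMap a b) := by
      funext t; simp [hg, AffineMap.lineMap_apply, add_comm]
    rw [he]
    simpa using h
  have hder : HasDerivAt g (fderiv ℝ f a (b - a)) 0 := by
    have h1 := line_hasDerivAt a (b - a) 0
    have h2 := (hdiff (a + (0:ℝ) • (b - a))).hasFDerivAt.comp_hasDerivAt 0 h1
    simp only [zero_smul, add_zero] at h2; exact h2
  have := hgconv.le_slope_of_hasDerivAt (mem_univ (0:ℝ)) (mem_univ (1:ℝ)) one_pos hder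
  rw [inner_gradient_eq]
  have hs : slope g 0 1 = f b - f a := by simp [slope, hg]
  rw [hs] at this
  linarith

lemma descent (f : E → ℝ) (β : ℝ)
    (hdiff : Differentiable ℝ f) (hdiff2 : Differentiable ℝ (gradient f))
    (hhess : ∀ x u : E, (inner ℝ (fderiv ℝ (gradient f) x u) u : ℝ) ≤ β * ‖u‖ ^ 2)
    (a v : E) :
    f (a + v) ≤ f a + (inner ℝ (gradient f a) v : ℝ) + β / 2 * ‖v‖ ^ 2 := by
  set c : ℝ → E := fun t => a + t • v with hc
  set ψ : ℝ → ℝ := fun t => (inner ℝ (gradient f (c t)) v : ℝ) with hψ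
  have hcder : ∀ t, HasDerivAt c v t := fun t => line_hasDerivAt a v t
  have hψder : ∀ t, HasDerivAt ψ ((inner ℝ (fderiv ℝ (gradient f) (c t) v) v : ℝ)) t := by
    intro t
    have h1 := (hdiff2 (c t)).hasFDerivAt.comp_hasDerivAt t (hcder t)
    have h2 := h1.inner ℝ (hasDerivAt_const t v)
    simpa only [inner_zero_right, zero_add, add_zero, Function.comp_apply] using h2
  have hψbound : ∀ t : ℝ, 0 ≤ t → ψ t ≤ ψ 0 + β * ‖v‖ ^ 2 * t := by
    intro t ht
    set φ : ℝ → ℝ := fun s => ψ s - β * ‖v‖ ^ 2 * s with hφ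
    have hφder : ∀ s, HasDerivAt φ ((inner ℝ (fderiv ℝ (gradient f) (c s) v) v : ℝ)
        - β * ‖v‖ ^ 2) s := by
      intro s
      have hlin : HasDerivAt (fun s : ℝ => β * ‖v‖ ^ 2 * s) (β * ‖v‖ ^ 2) s := by
        simpa using (hasDerivAt_id s).const_mul (β * ‖v‖ ^ 2)
      exact (hψder s).sub hlin
    have hanti : AntitoneOn φ (Set.Ici (0:ℝ)) := by
      apply antitoneOn_of_deriv_nonpos (convex_Ici 0)
      · exact fun s _ => ((hφder s).continuousAt).continuousWithinAt
      · exact fun s _ => ((hφder s).differentiableAt).differentiableWithinAt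
      · intro s _
        rw [(hφder s).deriv]
        have := hhess (c s) v
        linarith
    have := hanti (Set.self_mem_Ici) ht ht
    simp only [hφ] at this
    linarith [this]
  have hhder : ∀ t, HasDerivAt (fun s => f (c s) - s * ψ 0 - β * ‖v‖ ^ 2 * s ^ 2 / 2)
      (ψ t - ψ 0 - β * ‖v‖ ^ 2 * t) t := by
    intro t
    have h1 := (hdiff (c t)).hasFDerivAt.comp_hasDerivAt t (hcder t)
    have h2 : HasDerivAt (fun s : ℝ => s * ψ 0) (ψ 0) t := by
      simpa using (hasDerivAt_id t).mul_const (ψ 0)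
    have h3 : HasDerivAt (fun s : ℝ => β * ‖v‖ ^ 2 * s ^ 2 / 2) (β * ‖v‖ ^ 2 * t) t := by
      have := ((hasDerivAt_pow 2 t).const_mul (β * ‖v‖ ^ 2)).div_const 2
      refine this.congr_deriv ?_
      norm_num
      ring
    have := (h1.sub h2).sub h3
    refine this.congr_deriv ?_
    simp only [hψ, inner_gradient_eq, Function.comp]
  have hanti2 : AntitoneOn (fun s => f (c s) - s * ψ 0 - β * ‖v‖ ^ 2 * s ^ 2 / 2)
      (Set.Ici (0:ℝ)) := by
    apply antitoneOn_of_deriv_nonpos (convex_Ici 0)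
    · exact fun s _ => ((hhder s).continuousAt).continuousWithinAt
    · exact fun s _ => ((hhder s).differentiableAt).differentiableWithinAt
    · intro s hs
      rw [(hhder s).deriv]
      rw [interior_Ici] at hs
      have := hψbound s (le_of_lt hs)
      linarith
  have h01 : f (c 1) - 1 * ψ 0 - β * ‖v‖ ^ 2 * 1 ^ 2 / 2
      ≤ f (c 0) - 0 * ψ 0 - β * ‖v‖ ^ 2 * 0 ^ 2 / 2 :=
    hanti2 (Set.self_mem_Ici) (by norm_num : (1:ℝ) ∈ Set.Ici (0:ℝ)) zero_le_one
  have hc0 : c 0 = a := by simp [hc]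
  have hc1 : c 1 = a + v := by simp [hc]
  have e1 : ψ 0 = (inner ℝ (gradient f a) v : ℝ) := by rw [hψ]; simp only [hc0]
  rw [hc0, hc1, e1] at h01
  nlinarith [h01, sq_nonneg ‖v‖]

lemma arith_step (β r δ δ' g K : ℝ) (hβ : 0 < β) (hr : 0 ≤ r) (hK4 : 4 ≤ K)
    (h1 : δ' ≤ δ - g ^ 2 / (2 * β)) (h2 : δ ≤ g * r) (h3 : 0 ≤ δ) (h3' : 0 ≤ δ')
    (hg : 0 ≤ g) (ih : δ ≤ 2 * β * r ^ 2 / K) : δ' ≤ 2 * β * r ^ 2 / (K + 1) := by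
  have hKpos : (0:ℝ) < K := by linarith
  have h2β : (0:ℝ) < 2 * β := by linarith
  rw [le_div_iff₀ (by linarith : (0:ℝ) < K + 1)]
  have hA : 2 * β * δ' ≤ 2 * β * δ - g ^ 2 := by
    have hcan : g ^ 2 / (2 * β) * (2 * β) = g ^ 2 := div_mul_cancel₀ _ (ne_of_gt h2β)
    nlinarith [mul_le_mul_of_nonneg_left h1 (le_of_lt h2β)]
  have hB : δ ^ 2 ≤ g ^ 2 * r ^ 2 := by nlinarith
  have hC : δ * K ≤ 2 * β * r ^ 2 := by
    have := (le_div_iff₀ hKpos).mp ih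
    linarith
  set c : ℝ := 2 * β * r ^ 2 with hc
  have hcδ : c * δ' ≤ c * δ - δ ^ 2 := by
    nlinarith [mul_le_mul_of_nonneg_right hA (sq_nonneg r)]
  rcases eq_or_lt_of_le hr with hr0 | hrpos
  · have hc0 : c = 0 := by rw [hc, ← hr0]; ring
    have hδ0 : δ = 0 := by nlinarith
    have : δ' ≤ 0 := by
      have hgd : 0 ≤ g ^ 2 / (2 * β) := div_nonneg (sq_nonneg _) (le_of_lt h2β)
      linarith
    nlinarith
  · have hcpos : 0 < c := by rw [hc]; positivity
    nlinarith [mul_le_mul_of_nonneg_right hcδ (show (0:ℝ) ≤ K + 1 by linarith),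
      sq_nonneg (c - δ * K),
      mul_nonneg (mul_nonneg h3 (sub_nonneg.mpr hC)) (show (0:ℝ) ≤ K - 1 by linarith),
      sq_nonneg δ, hcpos]

/-- If `f` is convex and twice differentiable with `∇²f ⪯ β·I` (`β > 0`),
`x*` is a minimizer of `f`, `r ≥ 0` bounds `‖x − x*‖` on the sublevel set `{f ≤ f(y₀)}`,
and `(y_k)` satisfies the decrease guarantee `f(y_{k+1}) ≤ f(y_k) − ‖∇f(y_k)‖²/(2β)`, then
`f(y_k) − f(x*) ≤ 2βr²/(k+4)`. -/
theorem stmt8 {n : ℕ} (f : EuclideanSpace ℝ (Fin n) → ℝ) (β : ℝ) (hβ : 0 < β)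
    (hconv : ConvexOn ℝ Set.univ f)
    (hdiff : Differentiable ℝ f) (hdiff2 : Differentiable ℝ (gradient f))
    (hhess : ∀ (x u : EuclideanSpace ℝ (Fin n)),
      (inner ℝ (fderiv ℝ (gradient f) x u) u : ℝ) ≤ β * ‖u‖ ^ 2)
    (xstar : EuclideanSpace ℝ (Fin n)) (hxstar : ∀ z, f xstar ≤ f z)
    (y : ℕ → EuclideanSpace ℝ (Fin n))
    (r : ℝ) (hr : 0 ≤ r)
    (hsub : ∀ x : EuclideanSpace ℝ (Fin n), f x ≤ f (y 0) → ‖x - xstar‖ ≤ r)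
    (hdec : ∀ k, f (y (k + 1)) ≤ f (y k) - ‖gradient f (y k)‖ ^ 2 / (2 * β)) :
    ∀ k : ℕ, f (y k) - f xstar ≤ 2 * β * r ^ 2 / (k + 4) := by
  -- gradient at minimizer is zero
  have hgrad0 : gradient f xstar = 0 := by
    have hmin : IsLocalMin f xstar := Filter.Eventually.of_forall hxstar
    have := hmin.fderiv_eq_zero
    simp [gradient, this]
  -- f values nonincreasing, hence stay below f (y 0)
  have hmono : ∀ k, f (y k) ≤ f (y 0) := by
    intro k
    induction k with
    | zero => exact le_refl _
    | succ k ih =>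
      have := hdec k
      have hnn : 0 ≤ ‖gradient f (y k)‖ ^ 2 / (2 * β) :=
        div_nonneg (sq_nonneg _) (by linarith)
      linarith
  have hdist : ∀ k, ‖y k - xstar‖ ≤ r := fun k => hsub _ (hmono k)
  -- convexity bound
  have hδg : ∀ k, f (y k) - f xstar ≤ ‖gradient f (y k)‖ * r := by
    intro k
    have h1 := conv_grad f hconv hdiff (y k) xstar
    have h2 : (inner ℝ (gradient f (y k)) (y k - xstar) : ℝ)
        ≤ ‖gradient f (y k)‖ * ‖y k - xstar‖ := real_inner_le_norm _ _
    have h3 : ‖gradient f (y k)‖ * ‖y k - xstar‖ ≤ ‖gradient f (y k)‖ * r :=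
      mul_le_mul_of_nonneg_left (hdist k) (norm_nonneg _)
    have h4 : (inner ℝ (gradient f (y k)) (xstar - y k) : ℝ)
        = -(inner ℝ (gradient f (y k)) (y k - xstar) : ℝ) := by
      rw [← inner_neg_right]; congr 1; abel
    rw [h4] at h1
    linarith
  have hδnn : ∀ k, 0 ≤ f (y k) - f xstar := fun k => by linarith [hxstar (y k)]
  -- base case bound
  have hbase : f (y 0) - f xstar ≤ β / 2 * r ^ 2 := by
    have := descent f β hdiff hdiff2 hhess xstar (y 0 - xstar)
    rw [hgrad0] at this
    simp only [inner_zero_left, add_zero] at this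
    have he : xstar + (y 0 - xstar) = y 0 := by abel
    rw [he] at this
    have hn : ‖y 0 - xstar‖ ^ 2 ≤ r ^ 2 := by
      have := hdist 0
      nlinarith [norm_nonneg (y 0 - xstar)]
    nlinarith
  intro k
  induction k with
  | zero =>
    rw [le_div_iff₀ (by push_cast; norm_num : (0:ℝ) < ((0:ℕ):ℝ) + 4)]
    push_cast
    nlinarith [hbase]
  | succ k ih =>
    have hKe : ((k + 1 : ℕ) : ℝ) + 4 = ((k : ℝ) + 4) + 1 := by push_cast; ring
    rw [hKe]
    refine arith_step β r (f (y k) - f xstar) (f (y (k + 1)) - f xstar)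
      ‖gradient f (y k)‖ ((k : ℝ) + 4) hβ hr ?_ ?_ (hδg k) (hδnn k) (hδnn (k + 1))
      (norm_nonneg _) ih
    · have : (0:ℝ) ≤ (k:ℝ) := Nat.cast_nonneg k
      linarith
    · have := hdec k
      linarith
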